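/- Let G_{∥v₀} be a well-initialized prefix-independent game, let ε ≥ 0, and let σ̄ be an ε-SPE in G_{∥v₀}. Then there exists an ε-fixed point λ of the negotiation function such that for every history hv of G_{∥v₀}, the play ⟨σ̄_{∥hv}⟩_v is λ-consistent. -/

import Mathlib

noncomputable section

open Filter

/-- Prepend a finite list to an infinite sequence. -/
def prependList {V : Type} (h : List V) (ρ : ℕ → V) : ℕ → V :=
  fun n => if hn : n < h.length then h.get ⟨n, hn⟩ else ρ (n - h.length)

/-- A (turn-based, multiplayer) game on a graph: a finite directed graph `(V, E)`
in which every vertex has an outgoing edge, a partition of the vertices among the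
players (given by `control`), and an outcome function `payoff : Π → V^ω → ℝ`. -/
structure GameStruct (P V : Type) where
  E : V → V → Prop
  total : ∀ v, ∃ w, E v w
  control : V → P
  payoff : P → (ℕ → V) → ℝ

namespace GameStruct

variable {P V : Type}

/-- A strategy: given the history before the current vertex and the current vertex,
choose a successor along an edge. -/
structure Strategy (G : GameStruct P V) where
  toFun : List V → V → V
  valid : ∀ h v, G.E v (toFun h v)

/-- A complete strategy profile. -/
abbrev Profile (G : GameStruct P V) := P → G.Strategy

def step (G : GameStruct P V) (σ : G.Profile) (p : List V × V) : List V × V :=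
  (p.1 ++ [p.2], (σ (G.control p.2)).toFun p.1 p.2)

/-- The play induced by the profile `σ` from vertex `v`, after the past history `h`. -/
def play (G : GameStruct P V) (σ : G.Profile) (h : List V) (v : V) : ℕ → V :=
  fun n => ((G.step σ)^[n] (h, v)).2

/-- An infinite path in the graph. -/
def IsPlay (G : GameStruct P V) (ρ : ℕ → V) : Prop := ∀ n, G.E (ρ n) (ρ (n + 1))

def IsPlayFrom (G : GameStruct P V) (v₀ : V) (ρ : ℕ → V) : Prop := ρ 0 = v₀ ∧ G.IsPlay ρ

/-- A history: a finite nonempty path. -/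
def IsHist (G : GameStruct P V) (H : List V) : Prop := H ≠ [] ∧ List.Chain' G.E H

/-- `hv` is a history of the initialized game `G_{∥v₀}` (here `h` is the part strictly
before the last vertex `v`; it may be empty, in which case `v = v₀`). -/
def IsHistFrom (G : GameStruct P V) (v₀ : V) (h : List V) (v : V) : Prop :=
  List.Chain' G.E (h ++ [v]) ∧ (h ++ [v]).head? = some v₀

/-- The (finite) history `H` is compatible with the strategy `σ` of player `j`. -/
def CompatList (G : GameStruct P V) (σ : G.Strategy) (j : P) (H : List V) : Prop :=
  ∀ k u w, H[k]? = some u → H[k + 1]? = some w → G.control u = j →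
    w = σ.toFun (H.take k) u

/-- The history `H` is compatible with `σ̄_{-i}`, i.e. with every strategy of the
profile except possibly that of player `i`. -/
def CompatExcept (G : GameStruct P V) (i : P) (σ : G.Profile) (H : List V) : Prop :=
  ∀ j, j ≠ i → G.CompatList (σ j) j H

/-- A play `ρ` is `l`-consistent for the requirement `l : V → ℝ ∪ {±∞}`. -/
def Consistent (G : GameStruct P V) (l : V → EReal) (ρ : ℕ → V) : Prop :=
  ∀ n, l (ρ n) ≤ (G.payoff (G.control (ρ n)) (fun k => ρ (n + k)) : EReal)

variable [DecidableEq P]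

/-- The set of `l`-rational strategy profiles (for the players other than `i`) from `v`.
A profile is identified with a complete profile whose `i`-component is irrelevant. -/
def LamRat (G : GameStruct P V) (l : V → EReal) (i : P) (v : V) : Set G.Profile :=
  { σ | ∃ σi : G.Strategy, ∀ h w, G.IsHistFrom v h w → G.CompatExcept i σ (h ++ [w]) →
      G.Consistent l (G.play (Function.update σ i σi) h w) }

/-- `sup_{σ_i} μ_i(⟨σ̄_{-i}, σ_i⟩_v)`. -/
def valAgainst (G : GameStruct P V) (i : P) (σ : G.Profile) (v : V) : EReal :=
  ⨆ σi : G.Strategy, (G.payoff i (G.play (Function.update σ i σi) [] v) : EReal)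

/-- The negotiation function, with the convention `inf ∅ = +∞`. -/
def nego (G : GameStruct P V) (l : V → EReal) : V → EReal :=
  fun v => ⨅ σ ∈ G.LamRat l (G.control v) v, G.valAgainst (G.control v) σ v

/-- A game with steady negotiation. -/
def SteadyNego (G : GameStruct P V) : Prop :=
  ∀ (i : P) (v : V) (l : V → EReal),
    G.LamRat l i v = ∅ ∨
      ∃ σ ∈ G.LamRat l i v, ∀ τ ∈ G.LamRat l i v, G.valAgainst i σ v ≤ G.valAgainst i τ v

/-- Nash equilibrium in `G_{∥v₀}`. -/
def IsNE (G : GameStruct P V) (v₀ : V) (σ : G.Profile) : Prop :=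
  ∀ (i : P) (σ' : G.Strategy),
    G.payoff i (G.play (Function.update σ i σ') [] v₀) ≤ G.payoff i (G.play σ [] v₀)

/-- `ε`-subgame-perfect equilibrium in `G_{∥v₀}`. -/
def IsEpsSPE (G : GameStruct P V) (v₀ : V) (ε : ℝ) (σ : G.Profile) : Prop :=
  ∀ h v, G.IsHistFrom v₀ h v → ∀ (i : P) (σ' : G.Strategy),
    G.payoff i (prependList h (G.play (Function.update σ i σ') h v)) ≤
      G.payoff i (prependList h (G.play σ h v)) + ε

/-- `l` is an `ε`-fixed point of the negotiation function (`±∞` is within `ε` of itself). -/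
def IsEFix (G : GameStruct P V) (ε : ℝ) (l : V → EReal) : Prop :=
  ∀ v, l v - (ε : EReal) ≤ G.nego l v ∧ G.nego l v ≤ l v + (ε : EReal)

/-- Prefix-independent game. -/
def PrefixIndependent (G : GameStruct P V) : Prop :=
  ∀ (h : List V) (ρ : ℕ → V), G.IsHist h → G.IsPlay ρ → ∀ i,
    G.payoff i (prependList h ρ) = G.payoff i ρ

/-- Well-initialized game: every vertex is reachable from `v₀`. -/
def WellInit (G : GameStruct P V) (v₀ : V) : Prop :=
  ∀ v, Relation.ReflTransGen G.E v₀ v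

/-- `G` is the mean-payoff game given by the weight function `π`. -/
def IsMeanPayoff (G : GameStruct P V) (π : P → V → V → ℚ) : Prop :=
  ∀ i ρ, G.payoff i ρ =
    Filter.liminf
      (fun n : ℕ => (∑ k ∈ Finset.range n, (π i (ρ k) (ρ (k + 1)) : ℝ)) / n)
      Filter.atTop

end GameStruct

section AuxLemmas

open GameStruct

lemma prependList_nil {V : Type} (ρ : ℕ → V) : prependList [] ρ = ρ := by
  funext n
  simp [prependList]

namespace GameStruct

variable {P V : Type} [DecidableEq P] (G : GameStruct P V)

lemma play_isPlay (σ : G.Profile) (h : List V) (v : V) : G.IsPlay (G.play σ h v) := by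
  intro n
  show G.E (((G.step σ)^[n] (h, v)).2) (((G.step σ)^[n+1] (h, v)).2)
  rw [Function.iterate_succ_apply']
  exact (σ _).valid _ _

lemma iter_shift (σ τ : G.Profile) (h0 : List V)
    (hst : ∀ h' u, (τ (G.control u)).toFun h' u = (σ (G.control u)).toFun (h0 ++ h') u) :
    ∀ (n : ℕ) (h : List V) (v : V),
      (G.step σ)^[n] (h0 ++ h, v)
        = (h0 ++ ((G.step τ)^[n] (h, v)).1, ((G.step τ)^[n] (h, v)).2) := by
  intro n
  induction n with
  | zero => intro h v; rfl
  | succ n ih =>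
    intro h v
    rw [Function.iterate_succ_apply, Function.iterate_succ_apply]
    show (G.step σ)^[n] ((h0 ++ h) ++ [v], (σ (G.control v)).toFun (h0 ++ h) v) = _
    rw [List.append_assoc, ← hst h v]
    exact ih (h ++ [v]) ((τ (G.control v)).toFun h v)

lemma play_shift (σ τ : G.Profile) (h0 : List V)
    (hst : ∀ h' u, (τ (G.control u)).toFun h' u = (σ (G.control u)).toFun (h0 ++ h') u)
    (h : List V) (v : V) :
    G.play σ (h0 ++ h) v = G.play τ h v := by
  funext n
  show ((G.step σ)^[n] (h0 ++ h, v)).2 = ((G.step τ)^[n] (h, v)).2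
  rw [iter_shift G σ τ h0 hst n h v]

lemma play_suffix (σ : G.Profile) (h : List V) (v : V) (n : ℕ) :
    (fun k => G.play σ h v (n + k)) =
      G.play σ ((G.step σ)^[n] (h, v)).1 ((G.step σ)^[n] (h, v)).2 := by
  funext k
  show ((G.step σ)^[n + k] (h, v)).2 = ((G.step σ)^[k] (((G.step σ)^[n] (h, v)).1,
    ((G.step σ)^[n] (h, v)).2)).2
  rw [add_comm, Function.iterate_add_apply]

lemma isHistFrom_step {v₀ : V} {h : List V} {v w : V} (hh : G.IsHistFrom v₀ h v)
    (he : G.E v w) : G.IsHistFrom v₀ (h ++ [v]) w := by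
  obtain ⟨hc, hd⟩ := hh
  constructor
  · show List.IsChain _ _
    rw [List.isChain_append]
    refine ⟨hc, List.isChain_singleton w, ?_⟩
    intro x hx y hy
    simp only [List.head?, Option.mem_def, Option.some.injEq] at hy
    subst hy
    rw [List.getLast?_concat] at hx
    simp only [Option.mem_def, Option.some.injEq] at hx
    subst hx
    exact he
  · rw [List.head?_append_of_ne_nil _ (by simp)]
    exact hd

lemma iter_hist (σ : G.Profile) {v₀ : V} {h : List V} {v : V} (hh : G.IsHistFrom v₀ h v) :
    ∀ n, G.IsHistFrom v₀ ((G.step σ)^[n] (h, v)).1 ((G.step σ)^[n] (h, v)).2 := by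
  intro n
  induction n with
  | zero => exact hh
  | succ n ih =>
    rw [Function.iterate_succ_apply']
    exact isHistFrom_step G ih ((σ _).valid _ _)

lemma consistent_play (σ : G.Profile) (v₀ : V) (l : V → EReal)
    (hl : ∀ (u : V) (h : List V), G.IsHistFrom v₀ h u →
      l u ≤ (G.payoff (G.control u) (G.play σ h u) : EReal))
    {h : List V} {v : V} (hh : G.IsHistFrom v₀ h v) :
    G.Consistent l (G.play σ h v) := by
  intro n
  have hp := iter_hist G σ hh n
  have hsuf := play_suffix G σ h v n
  show l (G.play σ h v n) ≤
    (G.payoff (G.control (G.play σ h v n)) (fun k => G.play σ h v (n + k)) : EReal)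
  rw [hsuf]
  exact hl _ _ hp

lemma isHistFrom_trans {v₀ v w : V} {h h' : List V} (h1 : G.IsHistFrom v₀ h v)
    (h2 : G.IsHistFrom v h' w) : G.IsHistFrom v₀ (h ++ h') w := by
  obtain ⟨c1, d1⟩ := h1
  obtain ⟨c2, d2⟩ := h2
  constructor
  · show List.IsChain _ _
    rw [List.append_assoc, List.isChain_append]
    refine ⟨c1.prefix (List.prefix_append h [v]), c2, ?_⟩
    intro x hx y hy
    rw [d2] at hy
    simp only [Option.mem_def, Option.some.injEq] at hy
    subst hy
    obtain ⟨-, -, hlast⟩ := List.isChain_append.1 c1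
    exact hlast x hx v (by simp)
  · rw [List.append_assoc]
    cases h with
    | nil =>
      simp only [List.nil_append]
      simp only [List.nil_append, List.head?_cons, Option.some.injEq] at d1
      rw [d2, d1]
    | cons a t =>
      rw [List.head?_append_of_ne_nil _ (by simp)]
      rw [List.head?_append_of_ne_nil _ (by simp)] at d1
      exact d1

/-- The profile shifted by a fixed past history. -/
def shiftP (σ : G.Profile) (h0 : List V) : G.Profile :=
  fun j => ⟨fun h' u => (σ j).toFun (h0 ++ h') u, fun h' u => (σ j).valid (h0 ++ h') u⟩

lemma payoff_prepend (hpi : G.PrefixIndependent) {v₀ v : V} {h : List V}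
    (hh : G.IsHistFrom v₀ h v) (ρ : ℕ → V) (hρ : G.IsPlay ρ) (j : P) :
    G.payoff j (prependList h ρ) = G.payoff j ρ := by
  cases h with
  | nil => rw [prependList_nil]
  | cons a t =>
    exact hpi (a :: t) ρ ⟨by simp, hh.1.prefix (List.prefix_append _ [v])⟩ hρ j

end GameStruct

end AuxLemmas


open GameStruct in
/-- In a well-initialized prefix-independent game, for every `ε`-SPE `σ̄`
there is an `ε`-fixed point `λ` of the negotiation function such that for every history
`hv`, the play `⟨σ̄_{∥hv}⟩_v` is `λ`-consistent. -/
theorem epsSPE_gives_eps_fixed_point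
    {P V : Type} [Fintype P] [Fintype V] [DecidableEq P]
    (G : GameStruct P V) (v₀ : V) (hwi : G.WellInit v₀) (hpi : G.PrefixIndependent)
    (ε : ℝ) (hε : 0 ≤ ε)
    (σ : G.Profile) (hσ : G.IsEpsSPE v₀ ε σ) :
    ∃ l : V → EReal, G.IsEFix ε l ∧
      ∀ h v, G.IsHistFrom v₀ h v → G.Consistent l (G.play σ h v) := by
  classical
  let l : V → EReal := fun u => ⨅ h : {h : List V // G.IsHistFrom v₀ h u},
    ((G.payoff (G.control u) (G.play σ h.1 u) : ℝ) : EReal)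
  have hl : ∀ (u : V) (h : List V), G.IsHistFrom v₀ h u →
      l u ≤ (G.payoff (G.control u) (G.play σ h u) : EReal) :=
    fun u h hh => iInf_le (fun h : {h : List V // G.IsHistFrom v₀ h u} =>
      ((G.payoff (G.control u) (G.play σ h.1 u) : ℝ) : EReal)) ⟨h, hh⟩
  refine ⟨l, ?_, fun h v hh => G.consistent_play σ v₀ l hl hh⟩
  intro v
  constructor
  · -- lower bound: l v - ε ≤ nego l v
    have h1 : l v ≤ G.nego l v := by
      refine le_iInf₂ fun σ' hσ' => ?_
      obtain ⟨σi, hσi⟩ := hσ'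
      have hist0 : G.IsHistFrom v [] v := ⟨List.isChain_singleton v, by simp⟩
      have compat0 : G.CompatExcept (G.control v) σ' ([] ++ [v]) := by
        intro j hj k u w hu hw hc
        simp at hw
      have hc := hσi [] v hist0 compat0
      have h0 := hc 0
      have hfun : (fun k => G.play (Function.update σ' (G.control v) σi) [] v (0 + k))
          = G.play (Function.update σ' (G.control v) σi) [] v := by
        funext k; rw [zero_add]
      rw [show G.play (Function.update σ' (G.control v) σi) [] v 0 = v from rfl, hfun] at h0
      exact h0.trans (le_iSup (fun σi => ((G.payoff (G.control v)
        (G.play (Function.update σ' (G.control v) σi) [] v) : ℝ) : EReal)) σi)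
    calc l v - (ε : EReal) ≤ l v - ((0 : ℝ) : EReal) :=
          EReal.sub_le_sub le_rfl (by exact_mod_cast hε)
      _ = l v := by
          rw [EReal.coe_zero, sub_zero]
      _ ≤ G.nego l v := h1
  · -- upper bound: nego l v ≤ l v + ε
    have key : ∀ h0, G.IsHistFrom v₀ h0 v →
        G.nego l v ≤ ((G.payoff (G.control v) (G.play σ h0 v) + ε : ℝ) : EReal) := by
      intro h0 hh0
      set σsh := G.shiftP σ h0 with hσsh
      have hshift : ∀ h' u, (σsh (G.control u)).toFun h' u
          = (σ (G.control u)).toFun (h0 ++ h') u := fun _ _ => rfl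
      have hmem : σsh ∈ G.LamRat l (G.control v) v := by
        refine ⟨σsh (G.control v), fun h' w hh' _ => ?_⟩
        rw [Function.update_eq_self]
        rw [← G.play_shift σ σsh h0 hshift h' w]
        exact G.consistent_play σ v₀ l hl (G.isHistFrom_trans hh0 hh')
      have step1 : G.nego l v ≤ G.valAgainst (G.control v) σsh v := iInf₂_le σsh hmem
      refine step1.trans (iSup_le fun σi' => ?_)
      -- unshift the deviation
      set σ'' : G.Strategy := ⟨fun H u => σi'.toFun (H.drop h0.length) u,
        fun H u => σi'.valid (H.drop h0.length) u⟩ with hσ''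
      have hst : ∀ h' u, ((Function.update σsh (G.control v) σi') (G.control u)).toFun h' u
          = ((Function.update σ (G.control v) σ'') (G.control u)).toFun (h0 ++ h') u := by
        intro h' u
        by_cases hcu : G.control u = G.control v
        · rw [hcu, Function.update_self, Function.update_self]
          show σi'.toFun h' u = σi'.toFun ((h0 ++ h').drop h0.length) u
          rw [List.drop_left]
        · rw [Function.update_of_ne hcu, Function.update_of_ne hcu]
          rfl
      have hplay : G.play (Function.update σ (G.control v) σ'') h0 v
          = G.play (Function.update σsh (G.control v) σi') [] v := by
        have := G.play_shift (Function.update σ (G.control v) σ'')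
          (Function.update σsh (G.control v) σi') h0 hst [] v
        rwa [List.append_nil] at this
      have hspe := hσ h0 v hh0 (G.control v) σ''
      rw [G.payoff_prepend hpi hh0 _ (G.play_isPlay _ _ _),
        G.payoff_prepend hpi hh0 _ (G.play_isPlay _ _ _)] at hspe
      rw [← hplay]
      exact_mod_cast hspe
    have h2 : G.nego l v - (ε : EReal) ≤ l v := by
      refine le_iInf fun hp => ?_
      obtain ⟨h0, hh0⟩ := hp
      have hk := EReal.sub_le_sub (key h0 hh0) (le_refl (ε : EReal))
      rwa [EReal.coe_add, EReal.add_sub_cancel_right] at hk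
    calc G.nego l v = G.nego l v - (ε : EReal) + (ε : EReal) :=
          (EReal.sub_add_cancel).symm
      _ ≤ l v + (ε : EReal) := add_le_add_left h2 _
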